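/- Fix an integer k ≥ 5 and let 𝒜 be the subalgebra of ℂ[y,z] generated by g_2 = y² − 2kz, g_3 = y³ − 3kyz, g_4 = z², g_5 = yz². Then for every weight n ≥ 2 (where wt y = 1, wt z = 2), the weight-n component 𝒜_{(n)} has dimension ⌊n/2⌋, with basis {y^n − n·k·y^{n−2}z} ∪ {y^{n−2j} z^j : 2 ≤ j ≤ ⌊n/2⌋}; moreover 𝒜_{(0)} = ℂ, 𝒜_{(1)} = 0, and ℂ[y,z]_{(n)} = ℂ·y^n ⊕ 𝒜_{(n)} for n ≥ 1. -/
import Mathlib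


open MvPolynomial

noncomputable def g2 (k : ℂ) : MvPolynomial (Fin 2) ℂ := X 0 ^ 2 - C (2 * k) * X 1
noncomputable def g3 (k : ℂ) : MvPolynomial (Fin 2) ℂ := X 0 ^ 3 - C (3 * k) * X 0 * X 1
noncomputable def g4 : MvPolynomial (Fin 2) ℂ := X 1 ^ 2
noncomputable def g5 : MvPolynomial (Fin 2) ℂ := X 0 * X 1 ^ 2

/-- The subalgebra `𝒜` generated by `g₂, g₃, g₄, g₅`, as a `ℂ`-submodule. -/
noncomputable def calA (k : ℂ) : Submodule ℂ (MvPolynomial (Fin 2) ℂ) :=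
  Subalgebra.toSubmodule (Algebra.adjoin ℂ {g2 k, g3 k, g4, g5})

/-- The weight-`n` component of `ℂ[y,z]` for the grading `wt y = 1`, `wt z = 2`. -/
noncomputable def Wt (n : ℕ) : Submodule ℂ (MvPolynomial (Fin 2) ℂ) :=
  weightedHomogeneousSubmodule ℂ (![1, 2] : Fin 2 → ℕ) n

namespace Stmt5Aux

abbrev Rc : Type := MvPolynomial (Fin 2) ℂ

noncomputable def Pk (k : ℂ) (n : ℕ) : Rc := X 0 ^ n - C ((n : ℂ) * k) * X 0 ^ (n - 2) * X 1
noncomputable def mon (a b : ℕ) : Rc := X 0 ^ a * X 1 ^ b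
noncomputable def dd (a b : ℕ) : Fin 2 →₀ ℕ := Finsupp.single 0 a + Finsupp.single 1 b

noncomputable def A' (k : ℂ) : Subalgebra ℂ Rc := Algebra.adjoin ℂ {g2 k, g3 k, g4, g5}

def Sset (k : ℂ) : Set Rc :=
  {p | p = 1 ∨ (∃ n, 2 ≤ n ∧ p = Pk k n) ∨ ∃ a b, 2 ≤ b ∧ p = mon a b}

noncomputable def B (k : ℂ) : Submodule ℂ Rc := Submodule.span ℂ (Sset k)

lemma mon_eq_monomial (a b : ℕ) : mon a b = monomial (dd a b) 1 := by
  rw [mon, dd, X_pow_eq_monomial, X_pow_eq_monomial, monomial_mul, one_mul]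

lemma dd_eq_iff {a b c e : ℕ} : dd a b = dd c e ↔ a = c ∧ b = e := by
  constructor
  · intro h
    have h0 := DFunLike.congr_fun h 0
    have h1 := DFunLike.congr_fun h 1
    simp [dd, Finsupp.single_apply] at h0 h1
    exact ⟨h0, h1⟩
  · rintro ⟨rfl, rfl⟩; rfl

lemma coeff_mon (a b c e : ℕ) :
    coeff (dd c e) (mon a b) = if a = c ∧ b = e then 1 else 0 := by
  rw [mon_eq_monomial, coeff_monomial]
  simp [dd_eq_iff]

lemma weight_dd (a b : ℕ) :
    Finsupp.weight (![1, 2] : Fin 2 → ℕ) (dd a b) = a + 2 * b := by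
  rw [dd, map_add]
  simp [Finsupp.weight_apply, Finsupp.sum_single_index]
  ring

lemma finsupp_fin2 (m : Fin 2 →₀ ℕ) : m = dd (m 0) (m 1) := by
  ext i
  fin_cases i <;> simp [dd, Finsupp.single_apply]

lemma mem_Wt_iff {p : Rc} {n : ℕ} :
    p ∈ Wt n ↔ IsWeightedHomogeneous (![1, 2] : Fin 2 → ℕ) p n := Iff.rfl

lemma mem_Wt_elim {p : Rc} {n : ℕ} (h : p ∈ Wt n) {a b : ℕ}
    (hc : coeff (dd a b) p ≠ 0) : a + 2 * b = n := by
  have := (mem_Wt_iff.1 h) hc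
  rwa [weight_dd] at this

lemma mon_mem_Wt (a b : ℕ) : mon a b ∈ Wt (a + 2 * b) := by
  rw [mem_Wt_iff, mon_eq_monomial]
  exact isWeightedHomogeneous_monomial _ _ _ (weight_dd a b)

lemma Pk_eq (k : ℂ) (n : ℕ) : Pk k n = mon n 0 - C ((n : ℂ) * k) * mon (n - 2) 1 := by
  simp [Pk, mon]; ring

lemma coeff_Pk (k : ℂ) (n c e : ℕ) :
    coeff (dd c e) (Pk k n) =
      (if n = c ∧ 0 = e then 1 else 0) - (n : ℂ) * k * (if n - 2 = c ∧ 1 = e then 1 else 0) := by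
  rw [Pk_eq, coeff_sub, coeff_C_mul, coeff_mon, coeff_mon]

lemma Pk_mem_Wt (k : ℂ) {n : ℕ} (hn : 2 ≤ n) : Pk k n ∈ Wt n := by
  rw [Pk_eq]
  refine sub_mem ?_ ?_
  · have := mon_mem_Wt n 0; simpa using this
  · rw [show (C ((n:ℂ)*k) : Rc) * mon (n-2) 1 = ((n:ℂ)*k) • mon (n-2) 1 by
      rw [smul_eq_C_mul]]
    apply Submodule.smul_mem
    have := mon_mem_Wt (n - 2) 1
    have e : n - 2 + 2 * 1 = n := by omega
    rwa [e] at this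

lemma g2_mem (k : ℂ) : g2 k ∈ A' k := Algebra.subset_adjoin (by simp)
lemma g3_mem (k : ℂ) : g3 k ∈ A' k := Algebra.subset_adjoin (by simp)
lemma g4_mem (k : ℂ) : g4 ∈ A' k := Algebra.subset_adjoin (by simp)
lemma g5_mem (k : ℂ) : g5 ∈ A' k := Algebra.subset_adjoin (by simp)

lemma C_mul_mem {c : ℂ} {p : Rc} {A : Subalgebra ℂ Rc} (h : p ∈ A) : C c * p ∈ A :=
  A.mul_mem (by rw [← MvPolynomial.algebraMap_eq]; exact A.algebraMap_mem c) h

lemma mem_of_smul_mem {c : ℂ} (hc : c ≠ 0) {p : Rc} {A : Subalgebra ℂ Rc}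
    (h : c • p ∈ A) : p ∈ A := by
  have := A.smul_mem h c⁻¹
  rwa [smul_smul, inv_mul_cancel₀ hc, one_smul] at this

lemma z3_mem {k : ℂ} (hk : k ≠ 0) : mon 0 3 ∈ A' k := by
  apply mem_of_smul_mem (c := 2 * k ^ 3) (by simp [hk])
  have h : (2 * k ^ 3) • (mon 0 3 : Rc) =
      C (3 * k ^ 2) * (g2 k * g4) - (g2 k) ^ 3 + (g3 k) ^ 2 := by
    rw [smul_eq_C_mul]
    simp only [mon, g2, g3, g4, map_mul, map_pow, map_ofNat]
    ring
  rw [h]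
  exact add_mem (sub_mem (C_mul_mem (mul_mem (g2_mem k) (g4_mem k)))
    (pow_mem (g2_mem k) 3)) (pow_mem (g3_mem k) 2)

lemma yz3_mem {k : ℂ} (hk : k ≠ 0) : mon 1 3 ∈ A' k := by
  apply mem_of_smul_mem (c := k) hk
  have h : k • (mon 1 3 : Rc) = g2 k * g5 - g3 k * g4 := by
    rw [smul_eq_C_mul]
    simp only [mon, g2, g3, g4, g5, map_mul, map_pow, map_ofNat]
    ring
  rw [h]
  exact sub_mem (mul_mem (g2_mem k) (g5_mem k)) (mul_mem (g3_mem k) (g4_mem k))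

lemma mon_mem {k : ℂ} (hk : k ≠ 0) : ∀ a b : ℕ, 2 ≤ b → mon a b ∈ A' k := by
  suffices h : ∀ N a b : ℕ, a + b ≤ N → 2 ≤ b → mon a b ∈ A' k by
    intro a b hb; exact h (a + b) a b le_rfl hb
  intro N
  induction N with
  | zero => intro a b hab hb; omega
  | succ N ih =>
    intro a b hab hb
    match a, b with
    | 0, 2 =>
      have : (mon 0 2 : Rc) = g4 := by simp [mon, g4]
      rw [this]; exact g4_mem k
    | 0, 3 => exact z3_mem hk
    | 0, (b + 4) =>
      have h1 : mon 0 (b + 2) ∈ A' k := ih 0 (b + 2) (by omega) (by omega)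
      have e : (mon 0 (b + 4) : Rc) = mon 0 (b + 2) * g4 := by
        simp [mon, g4]; ring
      rw [e]; exact mul_mem h1 (g4_mem k)
    | 1, 2 =>
      have : (mon 1 2 : Rc) = g5 := by simp [mon, g5]
      rw [this]; exact g5_mem k
    | 1, 3 => exact yz3_mem hk
    | 1, (b + 4) =>
      have h1 : mon 1 (b + 2) ∈ A' k := ih 1 (b + 2) (by omega) (by omega)
      have e : (mon 1 (b + 4) : Rc) = mon 1 (b + 2) * g4 := by
        simp [mon, g4]; ring
      rw [e]; exact mul_mem h1 (g4_mem k)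
    | (a + 2), b =>
      have h1 : mon a b ∈ A' k := ih a b (by omega) hb
      have h2 : mon a (b + 1) ∈ A' k := ih a (b + 1) (by omega) (by omega)
      have e : (mon (a + 2) b : Rc) = g2 k * mon a b + C (2 * k) * mon a (b + 1) := by
        simp only [mon, g2]; ring
      rw [e]
      exact add_mem (mul_mem (g2_mem k) h1) (C_mul_mem h2)

lemma Pk_two (k : ℂ) : Pk k 2 = g2 k := by
  simp only [Pk, g2]
  norm_num

lemma Pk_three (k : ℂ) : Pk k 3 = g3 k := by
  simp only [Pk, g3]
  norm_num

lemma Pk_mem {k : ℂ} (hk : k ≠ 0) : ∀ n : ℕ, 2 ≤ n → Pk k n ∈ A' k := by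
  suffices h : ∀ N n : ℕ, n ≤ N → 2 ≤ n → Pk k n ∈ A' k by
    intro n hn; exact h n n le_rfl hn
  intro N
  induction N with
  | zero => intro n h1 h2; omega
  | succ N ih =>
    intro n hn h2
    match n with
    | 2 => rw [Pk_two]; exact g2_mem k
    | 3 => rw [Pk_three]; exact g3_mem k
    | (m + 4) =>
      have h1 : Pk k (m + 2) ∈ A' k := ih (m + 2) (by omega) (by omega)
      have h2 : mon m 2 ∈ A' k := mon_mem hk m 2 le_rfl
      have e : Pk k (m + 4) = g2 k * Pk k (m + 2) - C (2 * ((m : ℂ) + 2) * k ^ 2) * mon m 2 := by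
        have e1 : m + 4 - 2 = m + 2 := by omega
        have e2 : m + 2 - 2 = m := by omega
        simp only [Pk, g2, mon, e1, e2]
        push_cast
        simp only [map_mul, map_add, map_pow, map_ofNat]
        ring
      rw [e]
      exact sub_mem (mul_mem (g2_mem k) h1) (C_mul_mem h2)

lemma one_mem_S (k : ℂ) : (1 : Rc) ∈ Sset k := Or.inl rfl
lemma Pk_mem_S (k : ℂ) {n : ℕ} (hn : 2 ≤ n) : Pk k n ∈ Sset k := Or.inr (Or.inl ⟨n, hn, rfl⟩)
lemma mon_mem_S (k : ℂ) {a b : ℕ} (hb : 2 ≤ b) : mon a b ∈ Sset k :=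
  Or.inr (Or.inr ⟨a, b, hb, rfl⟩)

lemma C_mul_mem_B {c : ℂ} {p : Rc} {k : ℂ} (h : p ∈ B k) : C c * p ∈ B k := by
  rw [← smul_eq_C_mul]; exact Submodule.smul_mem _ _ h

lemma mul_S_mem_B (k : ℂ) {x y : Rc} (hx : x ∈ Sset k) (hy : y ∈ Sset k) :
    x * y ∈ B k := by
  have hsub := Submodule.subset_span (R := ℂ) (s := Sset k)
  rcases hx with rfl | ⟨m, hm, rfl⟩ | ⟨a, b, hb, rfl⟩
  · rw [one_mul]; exact hsub hy
  · rcases hy with rfl | ⟨n, hn, rfl⟩ | ⟨c, d, hd, rfl⟩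
    · rw [mul_one]; exact hsub (Pk_mem_S k hm)
    · -- Pk m * Pk n
      obtain ⟨m', rfl⟩ := Nat.exists_eq_add_of_le hm
      obtain ⟨n', rfl⟩ := Nat.exists_eq_add_of_le hn
      have e : Pk k (2 + m') * Pk k (2 + n') =
          Pk k (4 + m' + n') + C (((2 + m' : ℕ) : ℂ) * ((2 + n' : ℕ) : ℂ) * k ^ 2) *
            mon (m' + n') 2 := by
        have e1 : 2 + m' - 2 = m' := by omega
        have e2 : 2 + n' - 2 = n' := by omega
        have e3 : 4 + m' + n' - 2 = 2 + m' + n' := by omega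
        simp only [Pk, mon, e1, e2, e3]
        push_cast
        simp only [map_mul, map_add, map_pow, map_ofNat]
        ring
      rw [e]
      exact add_mem (hsub (Pk_mem_S k (by omega)))
        (C_mul_mem_B (hsub (mon_mem_S k (by omega))))
    · -- Pk m * mon c d
      obtain ⟨m', rfl⟩ := Nat.exists_eq_add_of_le hm
      have e : Pk k (2 + m') * mon c d =
          mon (2 + m' + c) d - C (((2 + m' : ℕ) : ℂ) * k) * mon (m' + c) (d + 1) := by
        have e1 : 2 + m' - 2 = m' := by omega
        simp only [Pk, mon, e1]
        push_cast
        simp only [map_mul, map_add, map_ofNat]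
        ring
      rw [e]
      exact sub_mem (hsub (mon_mem_S k hd)) (C_mul_mem_B (hsub (mon_mem_S k (by omega))))
  · rcases hy with rfl | ⟨n, hn, rfl⟩ | ⟨c, d, hd, rfl⟩
    · rw [mul_one]; exact hsub (mon_mem_S k hb)
    · -- mon * Pk
      obtain ⟨n', rfl⟩ := Nat.exists_eq_add_of_le hn
      have e : mon a b * Pk k (2 + n') =
          mon (2 + n' + a) b - C (((2 + n' : ℕ) : ℂ) * k) * mon (n' + a) (b + 1) := by
        have e1 : 2 + n' - 2 = n' := by omega
        simp only [Pk, mon, e1]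
        push_cast
        simp only [map_mul, map_add, map_ofNat]
        ring
      rw [e]
      exact sub_mem (hsub (mon_mem_S k hb)) (C_mul_mem_B (hsub (mon_mem_S k (by omega))))
    · have e : mon a b * mon c d = mon (a + c) (b + d) := by
        simp only [mon]; ring
      rw [e]; exact hsub (mon_mem_S k (by omega))

lemma B_mul_closed (k : ℂ) : ∀ x ∈ B k, ∀ y ∈ B k, x * y ∈ B k := by
  have h : B k * B k ≤ B k := by
    rw [B, Submodule.span_mul_span]
    apply Submodule.span_le.2
    rintro p hp
    rw [Set.mem_mul] at hp
    obtain ⟨x, hx, y, hy, rfl⟩ := hp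
    exact mul_S_mem_B k hx hy
  intro x hx y hy
  exact h (Submodule.mul_mem_mul hx hy)

lemma A_eq_B {k : ℂ} (hk : k ≠ 0) : calA k = B k := by
  apply le_antisymm
  · show Subalgebra.toSubmodule (A' k) ≤ B k
    intro x hx
    have : A' k ≤ (B k).toSubalgebra (Submodule.subset_span (one_mem_S k))
        (fun x y hx hy => B_mul_closed k x hx y hy) := by
      apply Algebra.adjoin_le
      intro p hp
      simp only [Set.mem_insert_iff, Set.mem_singleton_iff] at hp
      rcases hp with rfl | rfl | rfl | rfl
      · exact Submodule.subset_span (by rw [← Pk_two k]; exact Pk_mem_S k le_rfl)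
      · exact Submodule.subset_span (by rw [← Pk_three k]; exact Pk_mem_S k (by omega))
      · exact Submodule.subset_span (by
          have : (g4 : Rc) = mon 0 2 := by simp [mon, g4]
          rw [this]; exact mon_mem_S k le_rfl)
      · exact Submodule.subset_span (by
          have : (g5 : Rc) = mon 1 2 := by simp [mon, g5]
          rw [this]; exact mon_mem_S k le_rfl)
    exact this hx
  · rw [B]
    apply Submodule.span_le.2
    intro p hp
    rcases hp with rfl | ⟨n, hn, rfl⟩ | ⟨a, b, hb, rfl⟩
    · exact one_mem (A' k)
    · exact Pk_mem hk n hn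
    · exact mon_mem hk a b hb

lemma one_mem_Wt : (1 : Rc) ∈ Wt 0 := isWeightedHomogeneous_one ℂ _

lemma Sset_homog {k : ℂ} {s : Rc} (hs : s ∈ Sset k) : ∃ m, s ∈ Wt m := by
  rcases hs with rfl | ⟨n, hn, rfl⟩ | ⟨a, b, hb, rfl⟩
  · exact ⟨0, one_mem_Wt⟩
  · exact ⟨n, Pk_mem_Wt k hn⟩
  · exact ⟨a + 2 * b, mon_mem_Wt a b⟩

lemma B_inf_Wt (k : ℂ) (n : ℕ) :
    B k ⊓ Wt n = Submodule.span ℂ (Sset k ∩ (Wt n : Set Rc)) := by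
  apply le_antisymm
  · rintro p ⟨hpB, hpW⟩
    have hfix : weightedHomogeneousComponent (![1, 2] : Fin 2 → ℕ) n p = p :=
      IsWeightedHomogeneous.weightedHomogeneousComponent_same hpW
    rw [← hfix]
    have hmap : Submodule.map (weightedHomogeneousComponent (![1, 2] : Fin 2 → ℕ) n) (B k) ≤
        Submodule.span ℂ (Sset k ∩ (Wt n : Set Rc)) := by
      rw [B, Submodule.map_span]
      apply Submodule.span_le.2
      rintro _ ⟨s, hs, rfl⟩
      obtain ⟨m, hm⟩ := Sset_homog hs
      by_cases hmn : m = n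
      · subst hmn
        rw [IsWeightedHomogeneous.weightedHomogeneousComponent_same hm]
        exact Submodule.subset_span ⟨hs, hm⟩
      · rw [IsWeightedHomogeneous.weightedHomogeneousComponent_ne n hm (Ne.symm hmn)]
        exact Submodule.zero_mem _
    exact hmap ⟨p, hpB, rfl⟩
  · apply Submodule.span_le.2
    rintro s ⟨hs, hw⟩
    exact ⟨Submodule.subset_span hs, hw⟩

-- characterizations of S ∩ Wt n
lemma one_mem_Wt_iff {n : ℕ} (h : (1 : Rc) ∈ Wt n) : n = 0 := by
  have hc : coeff (dd 0 0) (1 : Rc) ≠ 0 := by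
    have : (dd 0 0 : Fin 2 →₀ ℕ) = 0 := by simp [dd]
    rw [this]; simp
  have := mem_Wt_elim h hc; omega

lemma Pk_mem_Wt_iff {k : ℂ} {m n : ℕ} (hm : 2 ≤ m) (h : Pk k m ∈ Wt n) : m = n := by
  have hc : coeff (dd m 0) (Pk k m) ≠ 0 := by
    rw [coeff_Pk]
    simp only [and_true, eq_self_iff_true, if_true]
    norm_num
  have := mem_Wt_elim h hc; omega

lemma mon_mem_Wt_iff {a b n : ℕ} (h : mon a b ∈ Wt n) : a + 2 * b = n := by
  have hc : coeff (dd a b) (mon a b) ≠ 0 := by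
    rw [coeff_mon]; simp
  exact mem_Wt_elim h hc

noncomputable def fam (k : ℂ) (n : ℕ) : Fin (n / 2) → Rc :=
  fun j => if (j : ℕ) = 0 then Pk k n else mon (n - 2 * ((j : ℕ) + 1)) ((j : ℕ) + 1)

noncomputable def DD (n : ℕ) : Fin (n / 2) → (Fin 2 →₀ ℕ) :=
  fun i => if (i : ℕ) = 0 then dd n 0 else dd (n - 2 * ((i : ℕ) + 1)) ((i : ℕ) + 1)

lemma coeff_fam {k : ℂ} {n : ℕ} (hn : 2 ≤ n) (i j : Fin (n / 2)) :
    coeff (DD n i) (fam k n j) = if i = j then 1 else 0 := by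
  have hj2 : 2 * ((j : ℕ) + 1) ≤ n := by have := j.2; omega
  have hi2 : 2 * ((i : ℕ) + 1) ≤ n := by have := i.2; omega
  by_cases hj : (j : ℕ) = 0 <;> by_cases hi : (i : ℕ) = 0
  · have hij : i = j := Fin.ext (by omega)
    simp only [fam, DD, if_pos hj, if_pos hi, if_pos hij, coeff_Pk]
    rw [if_pos ⟨trivial, trivial⟩, if_neg (by omega)]
    simp
  · have hij : ¬ (i = j) := fun h => hi (h ▸ hj)
    simp only [fam, DD, if_pos hj, if_neg hi, if_neg hij, coeff_Pk]
    rw [if_neg (by omega), if_neg (by omega)]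
    ring
  · have hij : ¬ (i = j) := fun h => hj (h ▸ hi)
    simp only [fam, DD, if_neg hj, if_pos hi, if_neg hij, coeff_mon]
    rw [if_neg (by omega)]
  · by_cases hij : i = j
    · subst hij
      simp only [fam, DD, if_neg hj, coeff_mon]
      rw [if_pos ⟨trivial, trivial⟩]
      simp
    · simp only [fam, DD, if_neg hj, if_neg hi, if_neg hij, coeff_mon]
      rw [if_neg (by
        rintro ⟨h1, h2⟩
        exact hij (Fin.ext (by omega)))]

lemma fam_indep {k : ℂ} {n : ℕ} (hn : 2 ≤ n) : LinearIndependent ℂ (fam k n) := by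
  rw [Fintype.linearIndependent_iff]
  intro g hg i
  have h := congrArg (coeff (DD n i)) hg
  rw [coeff_sum] at h
  simp only [coeff_smul, coeff_fam hn, smul_eq_mul, mul_ite, mul_one, mul_zero,
    Finset.sum_ite_eq, Finset.mem_univ, if_true, coeff_zero] at h
  exact h

lemma span_fam {k : ℂ} {n : ℕ} (hn : 2 ≤ n) :
    Submodule.span ℂ (Sset k ∩ (Wt n : Set Rc)) = Submodule.span ℂ (Set.range (fam k n)) := by
  apply le_antisymm <;> apply Submodule.span_le.2
  · rintro s ⟨hs, hw⟩
    rcases hs with rfl | ⟨m, hm, rfl⟩ | ⟨a, b, hb, rfl⟩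
    · exact absurd (one_mem_Wt_iff hw) (by omega)
    · obtain rfl := Pk_mem_Wt_iff hm hw
      apply Submodule.subset_span
      exact ⟨⟨0, by omega⟩, by simp [fam]⟩
    · have hab := mon_mem_Wt_iff hw
      apply Submodule.subset_span
      refine ⟨⟨b - 1, by omega⟩, ?_⟩
      simp only [fam]
      rw [if_neg (show ¬(b - 1 = 0) by omega)]
      show mon (n - 2 * ((b - 1) + 1)) ((b - 1) + 1) = mon a b
      congr 1 <;> omega
  · rintro _ ⟨j, rfl⟩
    have hj2 : 2 * ((j : ℕ) + 1) ≤ n := by have := j.2; omega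
    by_cases hj : (j : ℕ) = 0
    · simp only [fam, if_pos hj]
      exact Submodule.subset_span ⟨Or.inr (Or.inl ⟨n, hn, rfl⟩), Pk_mem_Wt k hn⟩
    · simp only [fam, if_neg hj]
      refine Submodule.subset_span ⟨Or.inr (Or.inr ⟨_, _, by omega, rfl⟩), ?_⟩
      have := mon_mem_Wt (n - 2 * ((j : ℕ) + 1)) ((j : ℕ) + 1)
      rwa [show n - 2 * ((j : ℕ) + 1) + 2 * ((j : ℕ) + 1) = n from by omega] at this

lemma mon_n0 (n : ℕ) : mon n 0 = (X 0 : Rc) ^ n := by simp [mon]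

lemma calA_inf_Wt {k : ℂ} (hk : k ≠ 0) {n : ℕ} (hn : 2 ≤ n) :
    calA k ⊓ Wt n = Submodule.span ℂ (Set.range (fam k n)) := by
  rw [A_eq_B hk, B_inf_Wt, span_fam hn]

lemma Pk_smul_identity (k : ℂ) (a : ℕ) :
    (((a : ℂ) + 2) * k) • mon a 1 = mon (a + 2) 0 - Pk k (a + 2) := by
  rw [smul_eq_C_mul]
  simp only [Pk, mon, Nat.add_sub_cancel]
  push_cast
  simp only [map_mul, map_add, map_ofNat]
  ring

lemma sup_eq {k : ℂ} (hk : k ≠ 0) {n : ℕ} (hn : 1 ≤ n) :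
    Submodule.span ℂ {(X 0 : Rc) ^ n} ⊔ (calA k ⊓ Wt n) = Wt n := by
  apply le_antisymm
  · apply sup_le
    · apply Submodule.span_le.2
      rintro _ rfl
      have := mon_mem_Wt n 0
      rw [mon_n0] at this
      simpa using this
    · exact inf_le_right
  · intro p hp
    rw [← support_sum_monomial_coeff p]
    apply Submodule.sum_mem
    intro d hd
    rw [finsupp_fin2 d]
    set a := d 0 with ha
    set b := d 1 with hb
    have hc : coeff (dd a b) p ≠ 0 := by
      rw [← finsupp_fin2 d]; exact mem_support_iff.1 hd
    have hw : a + 2 * b = n := mem_Wt_elim hp hc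
    have hmono : (monomial (dd a b)) (coeff (dd a b) p) = coeff (dd a b) p • mon a b := by
      rw [mon_eq_monomial, smul_monomial, smul_eq_mul, mul_one]
    rw [hmono]
    apply Submodule.smul_mem
    -- now show mon a b ∈ sup
    match b, hw with
    | 0, hw =>
      apply Submodule.mem_sup_left
      apply Submodule.subset_span
      rw [mon_n0, show a = n by omega]
      rfl
    | 1, hw =>
      have hn2 : n = a + 2 := by omega
      subst hn2
      have h1 : mon (a + 2) 0 ∈
          Submodule.span ℂ {(X 0 : Rc) ^ (a + 2)} ⊔ (calA k ⊓ Wt (a + 2)) := by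
        apply Submodule.mem_sup_left
        apply Submodule.subset_span
        rw [mon_n0]; rfl
      have h2 : Pk k (a + 2) ∈
          Submodule.span ℂ {(X 0 : Rc) ^ (a + 2)} ⊔ (calA k ⊓ Wt (a + 2)) := by
        apply Submodule.mem_sup_right
        exact ⟨Pk_mem hk (a + 2) (by omega), Pk_mem_Wt k (by omega)⟩
      have h3 := Submodule.smul_mem _ (((a : ℂ) + 2) * k)⁻¹ (sub_mem h1 h2)
      rw [← Pk_smul_identity k a, smul_smul,
        inv_mul_cancel₀ (by
          apply mul_ne_zero _ hk
          exact_mod_cast (by omega : (a + 2 : ℕ) ≠ 0)), one_smul] at h3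
      exact h3
    | (b + 2), hw =>
      apply Submodule.mem_sup_right
      refine ⟨mon_mem hk a (b + 2) (by omega), ?_⟩
      have := mon_mem_Wt a (b + 2)
      rwa [hw] at this

lemma coeff_fam_n2 {k : ℂ} {n : ℕ} (hn : 2 ≤ n) (j : Fin (n / 2)) :
    coeff (dd (n - 2) 1) (fam k n j) = if (j : ℕ) = 0 then -((n : ℂ) * k) else 0 := by
  by_cases hj : (j : ℕ) = 0
  · rw [if_pos hj]
    have e : fam k n j = Pk k n := by rw [fam, if_pos hj]
    rw [e, coeff_Pk]
    split_ifs with h1 h2 <;> first | omega | ring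
  · rw [if_neg hj]
    have e : fam k n j = mon (n - 2 * ((j : ℕ) + 1)) ((j : ℕ) + 1) := by
      rw [fam, if_neg hj]
    rw [e, coeff_mon]
    split_ifs with h1 <;> first | omega | ring

lemma coeff_fam_n0 {k : ℂ} {n : ℕ} (hn : 2 ≤ n) (j : Fin (n / 2)) :
    coeff (dd n 0) (fam k n j) = if (j : ℕ) = 0 then 1 else 0 := by
  by_cases hj : (j : ℕ) = 0
  · rw [if_pos hj]
    have e : fam k n j = Pk k n := by rw [fam, if_pos hj]
    rw [e, coeff_Pk]
    split_ifs with h1 h2 <;> first | omega | ring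
  · rw [if_neg hj]
    have e : fam k n j = mon (n - 2 * ((j : ℕ) + 1)) ((j : ℕ) + 1) := by
      rw [fam, if_neg hj]
    rw [e, coeff_mon]
    split_ifs with h1 <;> first | omega | ring

lemma inf_Wt_one {k : ℂ} (hk : k ≠ 0) : calA k ⊓ Wt 1 = ⊥ := by
  rw [A_eq_B hk, B_inf_Wt]
  have hS : Sset k ∩ (Wt 1 : Set Rc) = ∅ := by
    ext s
    simp only [Set.mem_inter_iff, Set.mem_empty_iff_false, iff_false]
    rintro ⟨hs, hw⟩
    rcases hs with rfl | ⟨m, hm, rfl⟩ | ⟨a, b, hb, rfl⟩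
    · exact absurd (one_mem_Wt_iff hw) (by omega)
    · have := Pk_mem_Wt_iff hm hw; omega
    · have := mon_mem_Wt_iff hw; omega
  rw [hS, Submodule.span_empty]

lemma disj {k : ℂ} (hk : k ≠ 0) {n : ℕ} (hn : 1 ≤ n) :
    Disjoint (Submodule.span ℂ {(X 0 : Rc) ^ n}) (calA k ⊓ Wt n) := by
  rcases eq_or_lt_of_le hn with h1 | h2
  · rw [← h1, inf_Wt_one hk]
    exact disjoint_bot_right
  · have hn2 : 2 ≤ n := h2
    rw [Submodule.disjoint_def]
    intro x hx hx2
    rw [calA_inf_Wt hk hn2] at hx2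
    obtain ⟨c, rfl⟩ := Submodule.mem_span_singleton.1 hx
    obtain ⟨g, hg⟩ := (Submodule.mem_span_range_iff_exists_fun ℂ).1 hx2
    set i0 : Fin (n / 2) := ⟨0, by omega⟩ with hi0
    have key : ∀ (cc ee : ℕ) (val : ℂ),
        (∀ j : Fin (n / 2), coeff (dd cc ee) (fam k n j) = if (j : ℕ) = 0 then val else 0) →
        coeff (dd cc ee) (c • (X 0 : Rc) ^ n) = g i0 * val := by
      intro cc ee val hval
      rw [← hg, coeff_sum]
      have : ∀ j : Fin (n / 2), coeff (dd cc ee) (g j • fam k n j) =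
          if i0 = j then g j * val else 0 := by
        intro j
        rw [coeff_smul, hval j, smul_eq_mul]
        by_cases hj : (j : ℕ) = 0
        · rw [if_pos hj, if_pos (Fin.ext hj.symm : i0 = j)]
        · rw [if_neg hj, if_neg (fun h => hj (by rw [← h]) ), mul_zero]
      rw [Finset.sum_congr rfl (fun j _ => this j), Finset.sum_ite_eq]
      simp
    have k1 := key (n - 2) 1 (-((n : ℂ) * k)) (coeff_fam_n2 hn2)
    have k2 := key n 0 1 (coeff_fam_n0 hn2)
    rw [coeff_smul, smul_eq_mul, ← mon_n0, coeff_mon, if_neg (by omega), mul_zero] at k1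
    rw [coeff_smul, smul_eq_mul, ← mon_n0, coeff_mon, if_pos ⟨rfl, rfl⟩, mul_one] at k2
    have hnk : ((n : ℂ) * k) ≠ 0 :=
      mul_ne_zero (by exact_mod_cast (by omega : n ≠ 0)) hk
    have k1' : g i0 * ((n : ℂ) * k) = 0 := by linear_combination k1
    have hg0 : g i0 = 0 := (mul_eq_zero.1 k1').resolve_right hnk
    rw [hg0, zero_mul] at k2
    rw [k2, zero_smul]


lemma inf_Wt_zero {k : ℂ} (hk : k ≠ 0) :
    calA k ⊓ Wt 0 = Submodule.span ℂ {(1 : Rc)} := by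
  rw [A_eq_B hk, B_inf_Wt]
  have hS : Sset k ∩ (Wt 0 : Set Rc) = {1} := by
    ext s
    constructor
    · rintro ⟨hs, hw⟩
      rcases hs with rfl | ⟨m, hm, rfl⟩ | ⟨a, b, hb, rfl⟩
      · rfl
      · have := Pk_mem_Wt_iff hm hw; omega
      · have := mon_mem_Wt_iff hw; omega
    · rintro rfl
      exact ⟨one_mem_S k, one_mem_Wt⟩
  rw [hS]

end Stmt5Aux

theorem stmt_5 (k : ℕ) (hk : 5 ≤ k) :
    (calA (k : ℂ) ⊓ Wt 0 = Submodule.span ℂ {(1 : MvPolynomial (Fin 2) ℂ)}) ∧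
    (calA (k : ℂ) ⊓ Wt 1 = ⊥) ∧
    (∀ n : ℕ, 2 ≤ n →
      (calA (k : ℂ) ⊓ Wt n =
        Submodule.span ℂ (Set.range fun j : Fin (n / 2) =>
          if (j : ℕ) = 0 then
            (X 0 : MvPolynomial (Fin 2) ℂ) ^ n - C ((n : ℂ) * (k : ℂ)) * X 0 ^ (n - 2) * X 1
          else X 0 ^ (n - 2 * ((j : ℕ) + 1)) * X 1 ^ ((j : ℕ) + 1))) ∧
      LinearIndependent ℂ (fun j : Fin (n / 2) =>
          if (j : ℕ) = 0 then
            (X 0 : MvPolynomial (Fin 2) ℂ) ^ n - C ((n : ℂ) * (k : ℂ)) * X 0 ^ (n - 2) * X 1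
          else X 0 ^ (n - 2 * ((j : ℕ) + 1)) * X 1 ^ ((j : ℕ) + 1)) ∧
      Module.finrank ℂ (calA (k : ℂ) ⊓ Wt n : Submodule ℂ (MvPolynomial (Fin 2) ℂ)) = n / 2) ∧
    (∀ n : ℕ, 1 ≤ n →
      Submodule.span ℂ {(X 0 : MvPolynomial (Fin 2) ℂ) ^ n} ⊔ (calA (k : ℂ) ⊓ Wt n) = Wt n ∧
      Disjoint (Submodule.span ℂ {(X 0 : MvPolynomial (Fin 2) ℂ) ^ n}) (calA (k : ℂ) ⊓ Wt n)) := by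
  have hk0 : ((k : ℂ)) ≠ 0 := Nat.cast_ne_zero.2 (by omega)
  refine ⟨Stmt5Aux.inf_Wt_zero hk0, Stmt5Aux.inf_Wt_one hk0, ?_, ?_⟩
  · intro n hn
    have hfam : (fun j : Fin (n / 2) =>
        if (j : ℕ) = 0 then
          (X 0 : MvPolynomial (Fin 2) ℂ) ^ n - C ((n : ℂ) * (k : ℂ)) * X 0 ^ (n - 2) * X 1
        else X 0 ^ (n - 2 * ((j : ℕ) + 1)) * X 1 ^ ((j : ℕ) + 1)) = Stmt5Aux.fam (k : ℂ) n := by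
      funext j
      simp only [Stmt5Aux.fam, Stmt5Aux.Pk, Stmt5Aux.mon]
    refine ⟨?_, ?_, ?_⟩
    · rw [hfam, Stmt5Aux.calA_inf_Wt hk0 hn]
    · rw [hfam]; exact Stmt5Aux.fam_indep hn
    · rw [Stmt5Aux.calA_inf_Wt hk0 hn, finrank_span_eq_card (Stmt5Aux.fam_indep hn)]
      simp
  · intro n hn
    exact ⟨Stmt5Aux.sup_eq hk0 hn, Stmt5Aux.disj hk0 hn⟩
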